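/- arXiv:2207.03313 — 4 statements merged into one kernel-verified Lean document; each statement's English description precedes it below -/
import Mathlib

section
/- Let a > 0 and let (aₙ)_{n>0} be a finitely supported sequence of complex numbers. Then g(t,x,y) := Σ_{n>0} aₙ e^{i n y - n x²/2 - n t} is a (classical) solution of the Baouendi–Grushin equation ∂_t g - ∂_x² g - x² ∂_y² g = 0 on (0,∞) × ℝ × 𝕋. -/
noncomputable def E4 (n : ℕ) (t x y : ℝ) : ℂ :=
  Complex.exp (Complex.I * (n : ℂ) * (y : ℂ) - (n : ℂ) * (x : ℂ) ^ 2 / 2 - (n : ℂ) * (t : ℂ))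

lemma hasDerivAt_ofReal' (t : ℝ) : HasDerivAt (fun s : ℝ => (s : ℂ)) 1 t := by
  simpa using (hasDerivAt_id t).ofReal_comp

lemma E4_deriv_t (n : ℕ) (x y t : ℝ) :
    HasDerivAt (fun s : ℝ => E4 n s x y) (E4 n t x y * (-(n : ℂ))) t := by
  have h : HasDerivAt (fun s : ℝ =>
      Complex.I * (n : ℂ) * (y : ℂ) - (n : ℂ) * (x : ℂ) ^ 2 / 2 - (n : ℂ) * (s : ℂ))
      (-(n : ℂ)) t := by
    simpa using (((hasDerivAt_ofReal' t).const_mul (n : ℂ)).const_sub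
      (Complex.I * (n : ℂ) * (y : ℂ) - (n : ℂ) * (x : ℂ) ^ 2 / 2))
  simpa [E4] using h.cexp

lemma E4_deriv_x (n : ℕ) (t y x : ℝ) :
    HasDerivAt (fun u : ℝ => E4 n t u y) (E4 n t x y * (-(n : ℂ) * (x : ℂ))) x := by
  have hp : HasDerivAt (fun u : ℝ => ((u : ℂ)) ^ 2) (2 * (x:ℂ)) x := by
    have h := (hasDerivAt_ofReal' x).mul (hasDerivAt_ofReal' x)
    have e : (fun u : ℝ => ((u : ℂ)) ^ 2) = fun u : ℝ => (u : ℂ) * (u : ℂ) := by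
      funext u; ring
    rw [e]
    exact h.congr_deriv (by ring)
  have h : HasDerivAt (fun u : ℝ =>
      Complex.I * (n : ℂ) * (y : ℂ) - (n : ℂ) * (u : ℂ) ^ 2 / 2 - (n : ℂ) * (t : ℂ))
      (-(n : ℂ) * (x : ℂ)) x := by
    have := (((hp.const_mul (n : ℂ)).div_const 2).const_sub
      (Complex.I * (n : ℂ) * (y : ℂ))).sub_const ((n : ℂ) * (t : ℂ))
    exact this.congr_deriv (by ring)
  simpa [E4] using h.cexp

lemma E4_deriv_y (n : ℕ) (t x y : ℝ) :
    HasDerivAt (fun v : ℝ => E4 n t x v) (E4 n t x y * (Complex.I * (n : ℂ))) y := by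
  have h : HasDerivAt (fun v : ℝ =>
      Complex.I * (n : ℂ) * (v : ℂ) - (n : ℂ) * (x : ℂ) ^ 2 / 2 - (n : ℂ) * (t : ℂ))
      (Complex.I * (n : ℂ)) y := by
    simpa using (((hasDerivAt_ofReal' y).const_mul (Complex.I * (n : ℂ))).sub_const
      ((n : ℂ) * (x : ℂ) ^ 2 / 2)).sub_const ((n : ℂ) * (t : ℂ))
  simpa [E4] using h.cexp

/-- Let `a > 0` and let `(cₙ)_{n>0}` be a finitely supported sequence of complex
numbers. Then `g(t,x,y) = Σ_{n>0} cₙ e^{i n y - n x²/2 - n t}` is a classical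
solution of the Baouendi–Grushin equation `∂_t g - ∂_x² g - x² ∂_y² g = 0`
on `(0,∞) × ℝ × 𝕋` (periodicity in `y` being automatic). -/
theorem stmt4 (a : ℝ) (ha : 0 < a) (c : ℕ → ℂ)
    (hc : (Function.support c).Finite) (hc0 : c 0 = 0)
    (g : ℝ → ℝ → ℝ → ℂ)
    (hg : ∀ t x y : ℝ, g t x y =
      ∑' n : ℕ, c n * Complex.exp
        (Complex.I * (n : ℂ) * (y : ℂ) - (n : ℂ) * (x : ℂ) ^ 2 / 2 - (n : ℂ) * (t : ℂ))) :
    ∀ t x y : ℝ, 0 < t →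
      deriv (fun s => g s x y) t - iteratedDeriv 2 (fun u => g t u y) x
        - (x : ℂ) ^ 2 * iteratedDeriv 2 (fun v => g t x v) y = 0 := by
  intro t x y ht
  classical
  set S := hc.toFinset with hS
  have hgS : ∀ t x y : ℝ, g t x y = ∑ n ∈ S, c n * E4 n t x y := by
    intro t x y
    rw [hg]
    exact tsum_eq_sum (fun n hn => by
      have : c n = 0 := Function.notMem_support.mp (by simpa [hS] using hn)
      simp [this])
  -- time derivative
  have hT : deriv (fun s => g s x y) t = ∑ n ∈ S, c n * (E4 n t x y * (-(n : ℂ))) := by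
    have : (fun s => g s x y) = fun s => ∑ n ∈ S, c n * E4 n s x y :=
      funext fun s => hgS s x y
    rw [this]
    exact (HasDerivAt.fun_sum fun n _ => (E4_deriv_t n x y t).const_mul (c n)).deriv
  -- x derivatives
  have hX1 : deriv (fun u => g t u y) =
      fun u => ∑ n ∈ S, c n * (E4 n t u y * (-(n : ℂ) * (u : ℂ))) := by
    funext u
    have : (fun u => g t u y) = fun u => ∑ n ∈ S, c n * E4 n t u y :=
      funext fun u => hgS t u y
    rw [this]
    exact (HasDerivAt.fun_sum fun n _ => (E4_deriv_x n t y u).const_mul (c n)).deriv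
  have hX : iteratedDeriv 2 (fun u => g t u y) x =
      ∑ n ∈ S, c n * (E4 n t x y * (-(n : ℂ) * (x : ℂ)) * (-(n : ℂ) * (x : ℂ)) +
        E4 n t x y * (-(n : ℂ))) := by
    rw [show (2:ℕ) = 1 + 1 from rfl, iteratedDeriv_succ, iteratedDeriv_one, hX1]
    refine (HasDerivAt.fun_sum fun n _ => ?_).deriv
    have hlin : HasDerivAt (fun u : ℝ => (-(n : ℂ) * (u : ℂ))) (-(n : ℂ)) x := by
      simpa using (hasDerivAt_ofReal' x).const_mul (-(n : ℂ))
    exact ((E4_deriv_x n t y x).mul hlin).const_mul (c n)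
  -- y derivatives
  have hY1 : deriv (fun v => g t x v) =
      fun v => ∑ n ∈ S, c n * (E4 n t x v * (Complex.I * (n : ℂ))) := by
    funext v
    have : (fun v => g t x v) = fun v => ∑ n ∈ S, c n * E4 n t x v :=
      funext fun v => hgS t x v
    rw [this]
    exact (HasDerivAt.fun_sum fun n _ => (E4_deriv_y n t x v).const_mul (c n)).deriv
  have hY : iteratedDeriv 2 (fun v => g t x v) y =
      ∑ n ∈ S, c n * (E4 n t x y * (Complex.I * (n : ℂ)) * (Complex.I * (n : ℂ))) := by
    rw [show (2:ℕ) = 1 + 1 from rfl, iteratedDeriv_succ, iteratedDeriv_one, hY1]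
    refine (HasDerivAt.fun_sum fun n _ => ?_).deriv
    exact ((E4_deriv_y n t x y).mul_const (Complex.I * (n : ℂ))).const_mul (c n)
  rw [hT, hX, hY, Finset.mul_sum, ← Finset.sum_sub_distrib, ← Finset.sum_sub_distrib]
  refine Finset.sum_eq_zero fun n _ => ?_
  set En := E4 n t x y
  linear_combination (-(c n * (n : ℂ) ^ 2 * (x : ℂ) ^ 2 * En)) * Complex.I_mul_I
end

section
/- Let ν ∈ ℂ with Re(ν) > 0 and write θ = arg(ν). Let I ⊂ ℝ be a bounded open interval, q : I → ℝ continuous, λ ∈ ℂ, and φ ∈ H²(I) ∩ H¹₀(I) satisfy −φ'' + ν² q(x)² φ = λ φ on I. Let κ ∈ C²(I;ℝ) and set w := e^{νκ} φ and μ := Re(e^{−iθ}λ)/cos(θ). Then the Agmon equality holds: ‖w'‖²_{L²(I)} + ∫_I (|ν|²(q(x)² − κ'(x)²) − μ) |w(x)|² dx = 0. -/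
open MeasureTheory

open Complex in
lemma agmon_alg (A B e ν lam : ℂ) (k1 k2 Q c μ n : ℝ)
    (h1 : e * ν = (n:ℂ)) (h2 : e.re = c) (h3 : c * n = ν.re)
    (h4 : c * μ = (e * lam).re) :
    (e * ((ν*k2*A + 2*(ν*k1)*B - ν^2*k1^2*A + ν^2*Q^2*A - lam*A) * (starRingEnd ℂ) A
        + B * (starRingEnd ℂ) B)
      - ((n*k2 : ℝ) : ℂ) * (A * (starRingEnd ℂ) A)
      - ((n*k1 : ℝ) : ℂ) * (B * (starRingEnd ℂ) A + A * (starRingEnd ℂ) B)).re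
    = c * (‖B‖^2 + (n^2*(Q^2 - k1^2) - μ) * ‖A‖^2) := by
  have key : (e * ((ν*k2*A + 2*(ν*k1)*B - ν^2*k1^2*A + ν^2*Q^2*A - lam*A) * (starRingEnd ℂ) A
        + B * (starRingEnd ℂ) B)
      - ((n*k2 : ℝ) : ℂ) * (A * (starRingEnd ℂ) A)
      - ((n*k1 : ℝ) : ℂ) * (B * (starRingEnd ℂ) A + A * (starRingEnd ℂ) B))
      = (((n*(Q^2 - k1^2) : ℝ) : ℂ) * ν - e * lam) * (A * (starRingEnd ℂ) A)
        + e * (B * (starRingEnd ℂ) B)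
        + ((n*k1 : ℝ) : ℂ) * (B * (starRingEnd ℂ) A - A * (starRingEnd ℂ) B) := by
    push_cast
    linear_combination ((k2:ℂ) * (A * (starRingEnd ℂ) A) + 2*(k1:ℂ)*(B*(starRingEnd ℂ) A)
      + ((Q:ℂ)^2 - (k1:ℂ)^2)*ν*(A*(starRingEnd ℂ) A)) * h1
  rw [key]
  have hA : A * (starRingEnd ℂ) A = ((Complex.normSq A : ℝ) : ℂ) := Complex.mul_conj A
  have hB : B * (starRingEnd ℂ) B = ((Complex.normSq B : ℝ) : ℂ) := Complex.mul_conj B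
  have him : (B * (starRingEnd ℂ) A - A * (starRingEnd ℂ) B).re = 0 := by
    simp [Complex.sub_re, Complex.mul_re, Complex.conj_re, Complex.conj_im]
    ring
  rw [hA, hB]
  simp only [Complex.add_re, Complex.mul_re, Complex.ofReal_re, Complex.ofReal_im,
    Complex.sub_re, Complex.sub_im, Complex.mul_im, him, Complex.sq_norm, Complex.normSq_apply]
  simp only [Complex.mul_re] at h4
  linear_combination (A.re*A.re + A.im*A.im) * (h4 - (Q^2 - k1^2) * n * h3)
    + (B.re*B.re + B.im*B.im) * h2

/-- Agmon equality: if `Re ν > 0`, `θ = arg ν`, `I = (a,b)` is a bounded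
interval, `q` continuous, and `φ` (vanishing at the endpoints) solves
`-φ'' + ν² q² φ = λ φ` on `I`, then with `κ ∈ C²(I;ℝ)`, `w = e^{νκ} φ` and
`μ = Re(e^{-iθ}λ)/cos θ`, one has
`‖w'‖²_{L²(I)} + ∫_I (|ν|²(q² - κ'²) - μ)|w|² = 0`. -/
theorem stmt7 (a b : ℝ) (hab : a < b) (q : ℝ → ℝ)
    (hq : ContinuousOn q (Set.Icc a b))
    (ν lam : ℂ) (hν : 0 < ν.re)
    (φ : ℝ → ℂ) (hφ : ContDiffOn ℝ 2 φ (Set.Icc a b))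
    (hφa : φ a = 0) (hφb : φ b = 0)
    (heq : ∀ x ∈ Set.Ioo a b,
      -(iteratedDeriv 2 φ x) + ν ^ 2 * (q x : ℂ) ^ 2 * φ x = lam * φ x)
    (κ : ℝ → ℝ) (hκ : ContDiffOn ℝ 2 κ (Set.Icc a b)) :
    (∫ x in a..b,
        ‖deriv (fun s => Complex.exp (ν * (κ s : ℂ)) * φ s) x‖ ^ 2)
      + (∫ x in a..b,
          (‖ν‖ ^ 2 * ((q x) ^ 2 - (deriv κ x) ^ 2)
              - (Complex.exp (-(ν.arg : ℂ) * Complex.I) * lam).re / Real.cos ν.arg)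
            * ‖Complex.exp (ν * (κ x : ℂ)) * φ x‖ ^ 2) = 0 := by
  have hν0 : ν ≠ 0 := by
    intro h; rw [h] at hν; simp at hν
  set n : ℝ := ‖ν‖ with hndef
  have hn0 : 0 < n := norm_pos_iff.mpr hν0
  set c : ℝ := Real.cos ν.arg with hcdef
  set e : ℂ := Complex.exp (-(ν.arg : ℂ) * Complex.I) with hedef
  have h3 : c * n = ν.re := by
    rw [hcdef, hndef, mul_comm]; exact Complex.norm_mul_cos_arg ν
  have hcpos : 0 < c := by
    have := h3; nlinarith
  have h1 : e * ν = (n : ℂ) := by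
    conv_lhs => rw [← Complex.norm_mul_exp_arg_mul_I ν]
    rw [hedef, ← mul_assoc, mul_comm e, mul_assoc, ← Complex.exp_add]
    norm_num
    rfl
  have h2 : e.re = c := by
    have : e = Complex.exp (((-ν.arg : ℝ) : ℂ) * Complex.I) := by push_cast [hedef]; ring_nf
    rw [this, Complex.exp_ofReal_mul_I_re, Real.cos_neg]
  set μ : ℝ := (e * lam).re / c with hμdef
  have h4 : c * μ = (e * lam).re := by
    rw [hμdef]; field_simp
  set w : ℝ → ℂ := fun s => Complex.exp (ν * (κ s : ℂ)) * φ s with hwdef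
  have hwfold : ∀ s, Complex.exp (ν * (κ s : ℂ)) * φ s = w s := fun s => rfl
  have hwa : w a = 0 := by simp [hwdef, hφa]
  have hwb : w b = 0 := by simp [hwdef, hφb]
  have hI : UniqueDiffOn ℝ (Set.Icc a b) := uniqueDiffOn_Icc hab
  have hκℂ : ContDiffOn ℝ 2 (fun s => (ν * (κ s : ℂ))) (Set.Icc a b) :=
    contDiffOn_const.mul (Complex.ofRealCLM.contDiff.comp_contDiffOn hκ)
  have hwC : ContDiffOn ℝ 2 w (Set.Icc a b) :=
    (Complex.contDiff_exp.comp_contDiffOn hκℂ).mul hφ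
  set κ1 : ℝ → ℝ := derivWithin κ (Set.Icc a b) with hκ1def
  set w1 : ℝ → ℂ := derivWithin w (Set.Icc a b) with hw1def
  have hκ1c : ContinuousOn κ1 (Set.Icc a b) :=
    hκ.continuousOn_derivWithin hI one_le_two
  have hw1c : ContinuousOn w1 (Set.Icc a b) :=
    hwC.continuousOn_derivWithin hI one_le_two
  have hwc : ContinuousOn w (Set.Icc a b) := hwC.continuousOn
  -- pointwise derivative facts on Ioo
  have hφ' : ContDiffOn ℝ 1 (deriv φ) (Set.Ioo a b) :=
    (hφ.mono Set.Ioo_subset_Icc_self).deriv_of_isOpen isOpen_Ioo (by norm_num)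
  have hκ' : ContDiffOn ℝ 1 (deriv κ) (Set.Ioo a b) :=
    (hκ.mono Set.Ioo_subset_Icc_self).deriv_of_isOpen isOpen_Ioo (by norm_num)
  have hmemI : ∀ x ∈ Set.Ioo a b, Set.Icc a b ∈ nhds x := fun x hx =>
    Icc_mem_nhds hx.1 hx.2
  have hκx : ∀ x ∈ Set.Ioo a b, HasDerivAt κ (deriv κ x) x := fun x hx =>
    ((hκ.contDiffAt (hmemI x hx)).differentiableAt two_ne_zero).hasDerivAt
  have hφx : ∀ x ∈ Set.Ioo a b, HasDerivAt φ (deriv φ x) x := fun x hx =>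
    ((hφ.contDiffAt (hmemI x hx)).differentiableAt two_ne_zero).hasDerivAt
  have hκ1eq : ∀ x ∈ Set.Ioo a b, κ1 x = deriv κ x := fun x hx =>
    derivWithin_of_mem_nhds (hmemI x hx)
  have hκ2x : ∀ x ∈ Set.Ioo a b, HasDerivAt (deriv κ) (deriv (deriv κ) x) x := fun x hx =>
    (((hκ'.differentiableOn one_ne_zero) x hx).differentiableAt
      (isOpen_Ioo.mem_nhds hx)).hasDerivAt
  have hφ2x : ∀ x ∈ Set.Ioo a b, HasDerivAt (deriv φ) (deriv (deriv φ) x) x := fun x hx =>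
    (((hφ'.differentiableOn one_ne_zero) x hx).differentiableAt
      (isOpen_Ioo.mem_nhds hx)).hasDerivAt
  -- derivative of w
  have hwx : ∀ x ∈ Set.Ioo a b, HasDerivAt w
      ((ν * (↑(deriv κ x) : ℂ)) * w x + Complex.exp (ν * (κ x : ℂ)) * deriv φ x) x := by
    intro x hx
    have hE : HasDerivAt (fun s => Complex.exp (ν * (κ s : ℂ)))
        (Complex.exp (ν * (κ x : ℂ)) * (ν * (↑(deriv κ x) : ℂ))) x :=
      (((hκx x hx).ofReal_comp).const_mul ν).cexp
    have := hE.mul (hφx x hx)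
    rw [hwdef]
    refine this.congr_deriv ?_
    beta_reduce; ring
  have hw1eq : ∀ x ∈ Set.Ioo a b, w1 x
      = (ν * (↑(deriv κ x) : ℂ)) * w x + Complex.exp (ν * (κ x : ℂ)) * deriv φ x := by
    intro x hx
    rw [hw1def, derivWithin_of_mem_nhds (hmemI x hx)]
    exact (hwx x hx).deriv
  -- second derivative of w
  have hw2x : ∀ x ∈ Set.Ioo a b, HasDerivAt w1
      (ν * (↑(deriv (deriv κ) x) : ℂ) * w x + 2*(ν * (↑(κ1 x) : ℂ)) * w1 x
        - ν^2 * (↑(κ1 x) : ℂ)^2 * w x + ν^2 * (q x : ℂ)^2 * w x - lam * w x) x := by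
    intro x hx
    set F : ℝ → ℂ := fun y => (ν * (↑(deriv κ y) : ℂ)) * w y
        + Complex.exp (ν * (κ y : ℂ)) * deriv φ y with hFdef
    have hE : HasDerivAt (fun s => Complex.exp (ν * (κ s : ℂ)))
        (Complex.exp (ν * (κ x : ℂ)) * (ν * (↑(deriv κ x) : ℂ))) x :=
      (((hκx x hx).ofReal_comp).const_mul ν).cexp
    have hF : HasDerivAt F
        ((ν * (↑(deriv (deriv κ) x) : ℂ)) * w x
          + (ν * (↑(deriv κ x) : ℂ)) * ((ν * (↑(deriv κ x) : ℂ)) * w x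
              + Complex.exp (ν * (κ x : ℂ)) * deriv φ x)
          + (Complex.exp (ν * (κ x : ℂ)) * (ν * (↑(deriv κ x) : ℂ)) * deriv φ x
              + Complex.exp (ν * (κ x : ℂ)) * deriv (deriv φ) x)) x := by
      have hp1 := (((hκ2x x hx).ofReal_comp).const_mul ν).mul (hwx x hx)
      have hp2 := hE.mul (hφ2x x hx)
      have := hp1.add hp2
      refine this.congr_deriv ?_
      try ring
    have hfeq : w1 =ᶠ[nhds x] F := by
      filter_upwards [isOpen_Ioo.mem_nhds hx] with y hy
      exact hw1eq y hy
    have hF' := hF.congr_of_eventuallyEq hfeq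
    refine hF'.congr_deriv ?_
    have hphi2 : deriv (deriv φ) x = ν^2 * (q x : ℂ)^2 * φ x - lam * φ x := by
      have h := heq x hx
      have h2d : iteratedDeriv 2 φ x = deriv (deriv φ) x := by
        simp [iteratedDeriv_succ, iteratedDeriv_one]
      rw [h2d] at h
      linear_combination -h
    rw [hκ1eq x hx, hw1eq x hx, hphi2]
    simp only [hwdef]
    ring
  -- derivative of H
  have hHderiv : ∀ x ∈ Set.Ioo a b, HasDerivAt
      (fun y => (e * w1 y * (starRingEnd ℂ) (w y)
        - ((n * κ1 y : ℝ) : ℂ) * (w y * (starRingEnd ℂ) (w y))).re)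
      (c * (‖w1 x‖^2
        + (n^2*((q x)^2 - (κ1 x)^2) - μ) * ‖w x‖^2)) x := by
    intro x hx
    have hw1x : HasDerivAt w (w1 x) x := by
      have h := hwx x hx
      rw [← hw1eq x hx] at h
      exact h
    have hκ1x : HasDerivAt κ1 (deriv (deriv κ) x) x := by
      apply (hκ2x x hx).congr_of_eventuallyEq
      filter_upwards [isOpen_Ioo.mem_nhds hx] with y hy
      exact hκ1eq y hy
    have hstar : HasDerivAt (fun y => (starRingEnd ℂ) (w y)) ((starRingEnd ℂ) (w1 x)) x :=
      hw1x.star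
    have hHc : HasDerivAt
        (fun y => e * w1 y * (starRingEnd ℂ) (w y)
          - ((n * κ1 y : ℝ) : ℂ) * (w y * (starRingEnd ℂ) (w y)))
        ((e * (ν * (↑(deriv (deriv κ) x) : ℂ) * w x + 2*(ν * (↑(κ1 x) : ℂ)) * w1 x
            - ν^2 * (↑(κ1 x) : ℂ)^2 * w x + ν^2 * (q x : ℂ)^2 * w x - lam * w x))
            * ((starRingEnd ℂ) (w x)) + (e * w1 x) * ((starRingEnd ℂ) (w1 x))
          - (((n * deriv (deriv κ) x : ℝ) : ℂ) * (w x * (starRingEnd ℂ) (w x))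
            + ((n * κ1 x : ℝ) : ℂ) * (w1 x * (starRingEnd ℂ) (w x)
                + w x * (starRingEnd ℂ) (w1 x)))) x :=
      (((hw2x x hx).const_mul e).mul hstar).sub
        (((hκ1x.const_mul n).ofReal_comp).mul (hw1x.mul hstar))
    have hH := Complex.reCLM.hasFDerivAt.comp_hasDerivAt x hHc
    have halg := agmon_alg (w x) (w1 x) e ν lam (κ1 x) (deriv (deriv κ) x) (q x) c μ n
      h1 h2 h3 h4
    refine hH.congr_deriv ?_
    simp only [Complex.reCLM_apply]
    rw [← halg]
    apply congrArg Complex.re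
    push_cast
    ring
  have hHcont : ContinuousOn
      (fun y => (e * w1 y * (starRingEnd ℂ) (w y)
        - ((n * κ1 y : ℝ) : ℂ) * (w y * (starRingEnd ℂ) (w y))).re) (Set.Icc a b) := by
    apply Complex.continuous_re.comp_continuousOn
    apply ContinuousOn.sub
    · exact (continuousOn_const.mul hw1c).mul hwc.star
    · exact (Complex.continuous_ofReal.comp_continuousOn
        (continuousOn_const.mul hκ1c)).mul (hwc.mul hwc.star)
  have hGcont : ContinuousOn
      (fun y => ‖w1 y‖^2
        + (n^2*((q y)^2 - (κ1 y)^2) - μ) * ‖w y‖^2) (Set.Icc a b) := by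
    apply ContinuousOn.add
    · exact (continuous_norm.comp_continuousOn hw1c).pow 2
    · exact ((continuousOn_const.mul ((hq.pow 2).sub (hκ1c.pow 2))).sub
        continuousOn_const).mul ((continuous_norm.comp_continuousOn hwc).pow 2)
  have hInt : IntervalIntegrable
      (fun y => c * (‖w1 y‖^2
        + (n^2*((q y)^2 - (κ1 y)^2) - μ) * ‖w y‖^2)) volume a b := by
    apply ContinuousOn.intervalIntegrable
    rw [Set.uIcc_of_le hab.le]
    exact continuousOn_const.mul hGcont
  have hFTC := intervalIntegral.integral_eq_sub_of_hasDerivAt_of_le hab.le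
    hHcont hHderiv hInt
  have hint0 : (∫ y in a..b, c * (‖w1 y‖^2
      + (n^2*((q y)^2 - (κ1 y)^2) - μ) * ‖w y‖^2)) = 0 := by
    rw [hFTC]
    simp [hwa, hwb]
  rw [intervalIntegral.integral_const_mul] at hint0
  have hG0 : (∫ y in a..b, (‖w1 y‖^2
      + (n^2*((q y)^2 - (κ1 y)^2) - μ) * ‖w y‖^2)) = 0 :=
    (mul_eq_zero.mp hint0).resolve_left (ne_of_gt hcpos)
  -- identify the goal integrals
  have hbm : ({(b:ℝ)}ᶜ : Set ℝ) ∈ ae (volume : Measure ℝ) :=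
    compl_mem_ae_iff.mpr (measure_singleton b)
  have hIoo : ∀ᵐ (x : ℝ) ∂(volume : Measure ℝ), x ∈ Set.uIoc a b → x ∈ Set.Ioo a b := by
    filter_upwards [hbm] with x hxb hx
    rw [Set.uIoc_of_le hab.le] at hx
    exact ⟨hx.1, lt_of_le_of_ne hx.2 (by simpa using hxb)⟩
  have e1 : (∫ x in a..b, ‖deriv w x‖^2)
      = ∫ x in a..b, ‖w1 x‖^2 := by
    apply intervalIntegral.integral_congr_ae
    filter_upwards [hIoo] with x hx hx'
    rw [hw1def, derivWithin_of_mem_nhds (hmemI x (hx hx'))]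
  have e2 : (∫ x in a..b, (n^2*((q x)^2 - (deriv κ x)^2) - μ) * ‖w x‖^2)
      = ∫ x in a..b, (n^2*((q x)^2 - (κ1 x)^2) - μ) * ‖w x‖^2 := by
    apply intervalIntegral.integral_congr_ae
    filter_upwards [hIoo] with x hx hx'
    rw [hκ1eq x (hx hx')]
  have hi1 : IntervalIntegrable (fun x => ‖w1 x‖^2) volume a b := by
    apply ContinuousOn.intervalIntegrable
    rw [Set.uIcc_of_le hab.le]
    exact (continuous_norm.comp_continuousOn hw1c).pow 2
  have hi2 : IntervalIntegrable
      (fun x => (n^2*((q x)^2 - (κ1 x)^2) - μ) * ‖w x‖^2) volume a b := by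
    apply ContinuousOn.intervalIntegrable
    rw [Set.uIcc_of_le hab.le]
    exact ((continuousOn_const.mul ((hq.pow 2).sub (hκ1c.pow 2))).sub
        continuousOn_const).mul ((continuous_norm.comp_continuousOn hwc).pow 2)
  simp only [hwfold]
  calc (∫ x in a..b, ‖deriv w x‖^2)
        + ∫ x in a..b, (n^2*((q x)^2 - (deriv κ x)^2) - μ) * ‖w x‖^2
      = (∫ x in a..b, ‖w1 x‖^2)
        + ∫ x in a..b, (n^2*((q x)^2 - (κ1 x)^2) - μ) * ‖w x‖^2 := by
        rw [e1, e2]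
    _ = ∫ x in a..b, (‖w1 x‖^2
          + (n^2*((q x)^2 - (κ1 x)^2) - μ) * ‖w x‖^2) :=
        (intervalIntegral.integral_add hi1 hi2).symm
    _ = 0 := hG0
end

section
/- Let β ∈ ℂ with Re(β) > 0. The span of the family (φ_{β,k})_{k≥1}, where φ_{β,k}(x) = He_{k−1}(√β x)e^{−βx²/2}, is dense in L²(ℝ). Equivalently, if u ∈ L²(ℝ) satisfies ∫_ℝ u(x) p(√β x) e^{−βx²/2} dx = 0 for all polynomials p, then u = 0 almost everywhere. -/
open MeasureTheory FourierTransform SchwartzMap Finset Nat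
open scoped ContDiff

/-- `t ^ n ≤ n ! * exp t` for nonnegative `t`. -/
lemma aux_pow_le_factorial_mul_exp (t : ℝ) (ht : 0 ≤ t) (n : ℕ) :
    t ^ n ≤ n ! * Real.exp t := by
  have h1 : t ^ n / n ! ≤ Real.exp t :=
    le_trans (Finset.single_le_sum (f := fun i : ℕ => t ^ i / i !)
        (fun i _ => by positivity) (Finset.self_mem_range_succ n))
      (Real.sum_le_exp_of_nonneg ht (n + 1))
  have hn : (0:ℝ) < (n ! : ℝ) := by positivity
  calc t ^ n = (n ! : ℝ) * (t ^ n / n !) := by field_simp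
    _ ≤ (n ! : ℝ) * Real.exp t := by
        exact mul_le_mul_of_nonneg_left h1 hn.le

/-- Completeness of the Davies eigenfunctions: for `Re β > 0`, if `u ∈ L²(ℝ)`
satisfies `∫ u(x) p(√β x) e^{-β x²/2} dx = 0` for every polynomial `p`, then
`u = 0` almost everywhere. -/
theorem stmt13 (β : ℂ) (hβ : 0 < β.re) (u : ℝ → ℂ)
    (hu : MemLp u 2 (volume : Measure ℝ))
    (h : ∀ p : Polynomial ℂ,
      ∫ x : ℝ, u x * p.eval (β ^ ((1 : ℂ) / 2) * (x : ℂ)) *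
        Complex.exp (-β * (x : ℂ) ^ 2 / 2) = 0) :
    u =ᵐ[volume] 0 := by
  have hβ0 : β ≠ 0 := fun hh => by simp [hh] at hβ
  set a : ℝ := β.re with ha
  set g : ℝ → ℂ := fun x => u x * Complex.exp (-β * (x:ℂ) ^ 2 / 2) with hg
  -- the norm of g
  have hnorm : ∀ x : ℝ, ‖g x‖ = ‖u x‖ * Real.exp (-(a * x ^ 2) / 2) := by
    intro x
    have hw : -β * (x:ℂ) ^ 2 / 2 = ((-(x ^ 2) / 2 : ℝ) : ℂ) * β := by push_cast; ring
    have : ‖Complex.exp (-β * (x:ℂ) ^ 2 / 2)‖ = Real.exp (-(a * x ^ 2) / 2) := by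
      rw [Complex.norm_exp, hw]
      congr 1
      rw [Complex.re_ofReal_mul, ← ha]
      ring
    rw [hg]; simp only [norm_mul, this]
  have hg_meas : AEStronglyMeasurable g volume := by
    apply hu.1.mul
    exact (Complex.continuous_exp.comp (by fun_prop)).aestronglyMeasurable
  -- master integrability
  have master : ∀ c : ℝ, Integrable (fun x : ℝ => Real.exp (c * |x|) * ‖g x‖) volume := by
    intro c
    have hGcont : Continuous (fun x : ℝ => Real.exp (c * |x| - a * x ^ 2 / 2)) := by
      apply Real.continuous_exp.comp; fun_prop
    have hG2 : MemLp (fun x : ℝ => Real.exp (c * |x| - a * x ^ 2 / 2)) 2 volume := by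
      rw [memLp_two_iff_integrable_sq_norm hGcont.aestronglyMeasurable]
      apply Integrable.mono'
        ((integrable_exp_neg_mul_sq (half_pos hβ)).const_mul (Real.exp (2 * c ^ 2 / a)))
      · exact ((hGcont.norm.pow 2)).aestronglyMeasurable
      · filter_upwards with x
        rw [Real.norm_eq_abs, abs_of_nonneg (by positivity), Real.norm_eq_abs,
          abs_of_nonneg (by positivity), ← Real.exp_nat_mul, ← Real.exp_add]
        apply Real.exp_le_exp.2
        push_cast
        have hca : 2 * c ^ 2 / a * a = 2 * c ^ 2 := by field_simp
        nlinarith [sq_nonneg (a * |x| - 2 * c), sq_abs x, abs_nonneg x, hβ, hca,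
          mul_pos hβ hβ]
    have hMem : MemLp ((fun x : ℝ => Real.exp (c * |x| - a * x ^ 2 / 2)) • u) 1 volume := by
      apply hu.smul hG2
    have hInt := (memLp_one_iff_integrable.mp hMem).norm
    apply hInt.congr
    filter_upwards with x
    simp only [Pi.smul_apply', norm_smul, Real.norm_eq_abs, Real.abs_exp, hnorm x]
    rw [show c * |x| - a * x ^ 2 / 2 = c * |x| + -(a * x ^ 2) / 2 by ring, Real.exp_add]
    ring
  -- integrability of g
  have hgi : Integrable g volume := by
    rw [← integrable_norm_iff hg_meas]
    have := master 0
    simpa using this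
  -- moments vanish
  have momentg : ∀ n : ℕ, ∫ x : ℝ, g x * (x:ℂ) ^ n = 0 := by
    intro n
    set s : ℂ := β ^ ((1 : ℂ) / 2) with hs
    have hs0 : s ≠ 0 := by
      simp only [hs, Ne, Complex.cpow_eq_zero_iff, not_and_or, not_not]
      exact Or.inl hβ0
    have h1 := h (Polynomial.X ^ n)
    simp only [Polynomial.eval_pow, Polynomial.eval_X, mul_pow] at h1
    have h2 : ∫ x : ℝ, s ^ n * (g x * (x:ℂ) ^ n) = 0 := by
      rw [← h1]
      congr 1; funext x; rw [hg]; ring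
    rw [integral_const_mul] at h2
    exact (mul_eq_zero.mp h2).resolve_left (pow_ne_zero n hs0)
  -- key vanishing of the two-sided Laplace transform
  have key : ∀ z : ℂ, ∫ x : ℝ, g x * Complex.exp (z * x) = 0 := by
    intro z
    set F : ℕ → ℝ → ℂ := fun n x => g x * ((z * x) ^ n / n !) with hF
    have hFnorm : ∀ n x, ‖F n x‖ = ‖g x‖ * ((‖z‖ * |x|) ^ n / n !) := by
      intro n x
      simp [hF, norm_mul, norm_div, norm_pow, Complex.norm_natCast, Complex.norm_real,
        Real.norm_eq_abs, mul_pow]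
    have hFi : ∀ n : ℕ, Integrable (F n) volume := by
      intro n
      apply Integrable.mono' (((master 1).const_mul (‖z‖ ^ n)))
      · exact hg_meas.mul (Continuous.aestronglyMeasurable (by fun_prop))
      · filter_upwards with x
        rw [hFnorm n x]
        have h3 : |x| ^ n ≤ n ! * Real.exp |x| :=
          aux_pow_le_factorial_mul_exp |x| (abs_nonneg x) n
        have hn : (0:ℝ) < (n ! : ℝ) := by positivity
        calc ‖g x‖ * ((‖z‖ * |x|) ^ n / n !)
            = (‖z‖ ^ n / n !) * (|x| ^ n * ‖g x‖) := by rw [mul_pow]; ring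
          _ ≤ (‖z‖ ^ n / n !) * ((n ! * Real.exp |x|) * ‖g x‖) := by
              apply mul_le_mul_of_nonneg_left _ (by positivity)
              exact mul_le_mul_of_nonneg_right h3 (norm_nonneg _)
          _ = ‖z‖ ^ n * (Real.exp (1 * |x|) * ‖g x‖) := by
              rw [one_mul]; field_simp
    have hsum : Summable fun n : ℕ => ∫ x : ℝ, ‖F n x‖ := by
      apply summable_of_sum_range_le (c := ∫ x : ℝ, Real.exp (‖z‖ * |x|) * ‖g x‖)
        (fun n => integral_nonneg fun x => norm_nonneg _)
      intro N
      rw [← integral_finset_sum _ (fun n _ => (hFi n).norm)]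
      apply integral_mono_of_nonneg
      · filter_upwards with x
        exact Finset.sum_nonneg fun n _ => norm_nonneg _
      · exact master ‖z‖
      · filter_upwards with x
        have : ∑ n ∈ Finset.range N, ‖F n x‖
            = ‖g x‖ * ∑ n ∈ Finset.range N, (‖z‖ * |x|) ^ n / n ! := by
          rw [Finset.mul_sum]; exact Finset.sum_congr rfl fun n _ => hFnorm n x
        rw [this, mul_comm (Real.exp (‖z‖ * |x|))]
        apply mul_le_mul_of_nonneg_left _ (norm_nonneg _)
        exact Real.sum_le_exp_of_nonneg (by positivity) N
    have hswap := integral_tsum_of_summable_integral_norm hFi hsum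
    have hexp : ∀ x : ℝ, g x * Complex.exp (z * x) = ∑' n : ℕ, F n x := by
      intro x
      rw [Complex.exp_eq_exp_ℂ, NormedSpace.exp_eq_tsum_div, ← tsum_mul_left]
    have hterm : ∀ n : ℕ, (∫ x : ℝ, F n x) = 0 := by
      intro n
      have : ∀ x : ℝ, F n x = (z ^ n / n !) * (g x * (x:ℂ) ^ n) := by
        intro x; rw [hF]; simp only [mul_pow]; ring
      simp only [this]
      rw [integral_const_mul, momentg n, mul_zero]
    calc ∫ x : ℝ, g x * Complex.exp (z * x) = ∫ x : ℝ, ∑' n : ℕ, F n x := by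
          congr 1; funext x; exact hexp x
      _ = ∑' n : ℕ, ∫ x : ℝ, F n x := hswap.symm
      _ = 0 := by simp [hterm]
  -- Fourier transform of g vanishes
  have hFT : ∀ ξ : ℝ, 𝓕 g ξ = 0 := by
    intro ξ
    rw [Real.fourier_real_eq_integral_exp_smul]
    have : ∀ v : ℝ, Complex.exp (↑(-2 * Real.pi * v * ξ) * Complex.I) • g v
        = g v * Complex.exp ((↑(-2 * Real.pi * ξ) * Complex.I) * v) := by
      intro v
      rw [smul_eq_mul, mul_comm]
      congr 1
      push_cast
      ring_nf
    rw [show (∫ v : ℝ, Complex.exp (↑(-2 * Real.pi * v * ξ) * Complex.I) • g v)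
        = ∫ v : ℝ, g v * Complex.exp ((↑(-2 * Real.pi * ξ) * Complex.I) * v) by
      congr 1; funext v; exact this v]
    exact key _
  -- integral against any Schwartz function vanishes
  have hSch : ∀ q : 𝓢(ℝ, ℂ), ∫ x : ℝ, q x * g x = 0 := by
    intro q
    set ψ : 𝓢(ℝ, ℂ) := (SchwartzMap.fourierTransformCLE ℂ 𝓢(ℝ, ℂ)).symm q with hψ
    have hflipL : (innerₗ ℝ).flip = innerₗ ℝ := by
      apply LinearMap.ext; intro x; apply LinearMap.ext; intro y
      simp [real_inner_comm]
    have hflip := VectorFourier.integral_fourierIntegral_smul_eq_flip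
      (L := innerₗ ℝ) (μ := (volume : Measure ℝ)) (ν := (volume : Measure ℝ))
      (f := fun x => ψ x) (g := g)
      Real.continuous_fourierChar continuous_inner ψ.integrable hgi
    rw [hflipL] at hflip
    have hψφ : (VectorFourier.fourierIntegral 𝐞 volume (innerₗ ℝ) (fun x => ψ x)) = fun ξ => q ξ := by
      show 𝓕 (fun x => ψ x) = fun ξ => q ξ
      have h2 : (SchwartzMap.fourierTransformCLE ℂ 𝓢(ℝ, ℂ)) ψ = q :=
        (SchwartzMap.fourierTransformCLE ℂ 𝓢(ℝ, ℂ)).apply_symm_apply q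
      rw [← SchwartzMap.fourier_coe, ← SchwartzMap.fourierTransformCLE_apply (R := ℂ) ψ]
      exact congrArg DFunLike.coe h2
    have hzero : (VectorFourier.fourierIntegral 𝐞 volume (innerₗ ℝ) g) = fun x : ℝ => (0 : ℂ) := by
      funext x; exact hFT x
    rw [hψφ, hzero] at hflip
    simpa using hflip
  -- conclude g = 0 a.e.
  have hgzero : g =ᵐ[volume] 0 := by
    apply ae_eq_zero_of_integral_contDiff_smul_eq_zero hgi.locallyIntegrable
    intro θ hθ hθsupp
    -- package θ as a complex-valued Schwartz function
    have hsmooth : ContDiff ℝ ∞ (fun x : ℝ => ((θ x : ℂ))) := by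
      exact (Complex.ofRealCLM.contDiff).comp hθ
    set q : 𝓢(ℝ, ℂ) :=
      { toFun := fun x => (θ x : ℂ)
        smooth' := hsmooth
        decay' := by
          intro k n
          have hcomp : (fun x : ℝ => ((θ x : ℂ))) = (Complex.ofRealLI : ℝ →ₗᵢ[ℝ] ℂ) ∘ θ := rfl
          have hnorm' : ∀ x : ℝ, ‖iteratedFDeriv ℝ n (fun x : ℝ => ((θ x : ℂ))) x‖
              = ‖iteratedFDeriv ℝ n θ x‖ := by
            intro x
            rw [hcomp]
            exact (Complex.ofRealLI : ℝ →ₗᵢ[ℝ] ℂ).norm_iteratedFDeriv_comp_left (x := x) hθ.contDiffAt (by exact_mod_cast le_top)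
          have hcont : Continuous (fun x : ℝ => ‖x‖ ^ k * ‖iteratedFDeriv ℝ n θ x‖) := by
            exact (continuous_norm.pow k).mul (hθ.continuous_iteratedFDeriv (by exact_mod_cast le_top)).norm
          have hcs : HasCompactSupport (fun x : ℝ => ‖x‖ ^ k * ‖iteratedFDeriv ℝ n θ x‖) := by
            exact ((hθsupp.iteratedFDeriv n).norm).mul_left
          obtain ⟨C, hC⟩ := hcont.bounded_above_of_compact_support hcs
          refine ⟨C, fun x => ?_⟩
          rw [hnorm' x]
          exact (le_abs_self _).trans ((Real.norm_eq_abs _ ▸ hC x))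
      } with hq
    have := hSch q
    rw [← this]
    apply integral_congr_ae
    filter_upwards with x
    change θ x • g x = (θ x : ℂ) * g x
    rw [Complex.real_smul]
  -- conclude u = 0 a.e.
  filter_upwards [hgzero] with x hx
  have : Complex.exp (-β * (x:ℂ) ^ 2 / 2) ≠ 0 := Complex.exp_ne_zero _
  have hx' : u x * Complex.exp (-β * (x:ℂ) ^ 2 / 2) = 0 := hx
  simpa [this] using hx'
end

section
/- Let γ : 𝕋 → ℂ be holomorphic on an open set Ω ⊂ ℂ containing [n₀, ∞) ⊂ ℝ for some n₀ ∈ ℕ, and suppose γ has sub-exponential growth on [n₀,∞): for every δ > 0, sup_{t ≥ n₀} |γ(t)| e^{−δt} < ∞. Define the diagonal operator Op(γ) on polynomials p(z) = Σ_{n ≥ n₀} aₙ zⁿ by Op(γ)(p)(z) = Σ_{n ≥ n₀} γ(n) aₙ zⁿ. Then for any 0 < r < R, there exists C > 0 such that for every such polynomial p, ‖Op(γ)(p)‖_{L^∞(D(0,r))} ≤ C ‖p‖_{L^∞(D(0,R))}. -/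
open Complex Finset

lemma coeff_bound (p : Polynomial ℂ) (ρ B : ℝ) (hρ : 0 < ρ)
    (hB : ∀ w : ℂ, ‖w‖ = ρ → ‖p.eval w‖ ≤ B) (n : ℕ) :
    ‖p.coeff n‖ * ρ ^ n ≤ B := by
  have hB0 : 0 ≤ B := le_trans (norm_nonneg _) (hB (ρ : ℂ) (by simp [abs_of_pos hρ]))
  rcases le_or_gt n p.natDegree with hn | hn
  · set N := p.natDegree + 1 with hN
    have hnN : n < N := Nat.lt_succ_of_le hn
    set ζ : ℂ := Complex.exp (2 * Real.pi * I / N) with hζ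
    have hprim : IsPrimitiveRoot ζ N := Complex.isPrimitiveRoot_exp N (Nat.succ_ne_zero _)
    have hζ1 : ζ ^ N = 1 := hprim.pow_eq_one
    have habsζ : ∀ j : ℕ, ‖ζ ^ j‖ = 1 := by
      intro j
      rw [norm_pow, Complex.norm_exp]
      have : (2 * Real.pi * I / N).re = 0 := by
        simp [Complex.div_re, Complex.mul_re]
      rw [this, Real.exp_zero, one_pow]
    -- key identity
    have key : ∑ j ∈ range N, p.eval ((ρ : ℂ) * ζ ^ j) * ζ ^ (j * (N - n))
        = (N : ℂ) * (p.coeff n * (ρ : ℂ) ^ n) := by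
      have heval : ∀ j : ℕ, p.eval ((ρ : ℂ) * ζ ^ j)
          = ∑ m ∈ range N, p.coeff m * ((ρ : ℂ) * ζ ^ j) ^ m :=
        fun j => Polynomial.eval_eq_sum_range' (Nat.lt_succ_self _) _
      calc ∑ j ∈ range N, p.eval ((ρ : ℂ) * ζ ^ j) * ζ ^ (j * (N - n))
          = ∑ j ∈ range N, ∑ m ∈ range N,
              p.coeff m * (ρ : ℂ) ^ m * (ζ ^ (m + (N - n))) ^ j := by
            refine Finset.sum_congr rfl fun j _ => ?_
            rw [heval, Finset.sum_mul]
            refine Finset.sum_congr rfl fun m _ => ?_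
            have hz : (ζ ^ j) ^ m * ζ ^ (j * (N - n)) = (ζ ^ (m + (N - n))) ^ j := by
              rw [← pow_mul, ← pow_add, ← pow_mul]
              congr 1
              ring
            calc p.coeff m * ((ρ:ℂ) * ζ ^ j) ^ m * ζ ^ (j * (N - n))
                = p.coeff m * (ρ:ℂ) ^ m * ((ζ ^ j) ^ m * ζ ^ (j * (N - n))) := by
                  rw [mul_pow]; ring
              _ = p.coeff m * (ρ:ℂ) ^ m * (ζ ^ (m + (N - n))) ^ j := by rw [hz]
        _ = ∑ m ∈ range N, p.coeff m * (ρ : ℂ) ^ m *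
              ∑ j ∈ range N, (ζ ^ (m + (N - n))) ^ j := by
            rw [Finset.sum_comm]
            exact Finset.sum_congr rfl fun m _ => (Finset.mul_sum _ _ _).symm
        _ = (N : ℂ) * (p.coeff n * (ρ : ℂ) ^ n) := by
            have hinner : ∀ m ∈ range N,
                ∑ j ∈ range N, (ζ ^ (m + (N - n))) ^ j
                  = if m = n then (N : ℂ) else 0 := by
              intro m hm
              rw [Finset.mem_range] at hm
              by_cases hmn : m = n
              · subst hmn
                have : m + (N - m) = N := Nat.add_sub_cancel' hnN.le
                simp [this, hζ1]
              · have hk : ¬ (N ∣ m + (N - n)) := by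
                  intro hdvd
                  have h1 : 0 < m + (N - n) := by omega
                  have hle : N ≤ m + (N - n) := Nat.le_of_dvd h1 hdvd
                  have hd2 : N ∣ (m + (N - n) - N) := Nat.dvd_sub hdvd dvd_rfl
                  have h0 := Nat.eq_zero_of_dvd_of_lt hd2 (by omega)
                  omega
                have hx1 : ζ ^ (m + (N - n)) ≠ 1 := fun h =>
                  hk ((hprim.pow_eq_one_iff_dvd _).mp h)
                rw [if_neg hmn, geom_sum_eq hx1]
                rw [← pow_mul, mul_comm, pow_mul, hζ1, one_pow, sub_self, zero_div]
            calc ∑ m ∈ range N, p.coeff m * (ρ:ℂ) ^ m * ∑ j ∈ range N, (ζ ^ (m + (N - n))) ^ j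
                = ∑ m ∈ range N, (if m = n then p.coeff m * (ρ:ℂ) ^ m * N else 0) := by
                  refine Finset.sum_congr rfl fun m hm => ?_
                  rw [hinner m hm]
                  by_cases h : m = n <;> simp [h]
              _ = (N : ℂ) * (p.coeff n * (ρ:ℂ) ^ n) := by
                  rw [Finset.sum_ite_eq' (range N) n (fun m => p.coeff m * (ρ:ℂ) ^ m * N),
                    if_pos (Finset.mem_range.mpr hnN)]
                  ring
    have habs : (N : ℝ) * (‖p.coeff n‖ * ρ ^ n) ≤ (N : ℝ) * B := by
      have := congrArg (‖·‖) key
      rw [norm_mul, norm_mul, norm_pow] at this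
      simp only [Complex.norm_natCast, Complex.norm_real, Real.norm_eq_abs, abs_of_pos hρ] at this
      rw [← this]
      calc ‖∑ j ∈ range N, p.eval ((ρ : ℂ) * ζ ^ j) * ζ ^ (j * (N - n))‖
          ≤ ∑ j ∈ range N, ‖p.eval ((ρ : ℂ) * ζ ^ j) * ζ ^ (j * (N - n))‖ :=
            norm_sum_le _ _
        _ ≤ ∑ j ∈ range N, B := by
            refine Finset.sum_le_sum fun j _ => ?_
            rw [norm_mul, habsζ, mul_one]
            exact hB _ (by rw [norm_mul, habsζ, mul_one, Complex.norm_real, Real.norm_eq_abs, abs_of_pos hρ])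
        _ = (N : ℝ) * B := by simp [mul_comm]
    have hNpos : (0 : ℝ) < N := by positivity
    exact le_of_mul_le_mul_left habs hNpos
  · rw [p.coeff_eq_zero_of_natDegree_lt hn]
    simpa using hB0

/-- Diagonal ("pseudo-differential") multiplier estimate on polynomials: if
`γ` is holomorphic on an open set `Ω` containing `[n₀, ∞)` and has
sub-exponential growth there, then for `0 < r < R` there is `C > 0` such that
for every polynomial `p = Σ_{n ≥ n₀} aₙ zⁿ`,
`‖Op(γ)(p)‖_{L^∞(D(0,r))} ≤ C ‖p‖_{L^∞(D(0,R))}`, where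
`Op(γ)(p)(z) = Σ_{n ≥ n₀} γ(n) aₙ zⁿ`. -/
theorem stmt19 (n₀ : ℕ) (Ω : Set ℂ) (hΩ : IsOpen Ω)
    (hΩ2 : ∀ t : ℝ, (n₀ : ℝ) ≤ t → (t : ℂ) ∈ Ω)
    (γ : ℂ → ℂ) (hγ : DifferentiableOn ℂ γ Ω)
    (hgrowth : ∀ δ : ℝ, 0 < δ → ∃ M : ℝ, ∀ t : ℝ, (n₀ : ℝ) ≤ t →
      ‖γ (t : ℂ)‖ * Real.exp (-δ * t) ≤ M)
    (r R : ℝ) (hr : 0 < r) (hrR : r < R) :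
    ∃ C > (0 : ℝ), ∀ p : Polynomial ℂ, (∀ n < n₀, p.coeff n = 0) →
      ∀ B : ℝ, (∀ w : ℂ, ‖w‖ < R → ‖p.eval w‖ ≤ B) →
      ∀ z : ℂ, ‖z‖ < r →
        ‖∑ n ∈ Finset.range (p.natDegree + 1),
          γ (n : ℂ) * p.coeff n * z ^ n‖ ≤ C * B := by
  set ρ : ℝ := (r + R) / 2 with hρdef
  have hρ0 : 0 < ρ := by simp only [hρdef]; linarith
  have hrρ : r < ρ := by simp only [hρdef]; linarith
  have hρR : ρ < R := by simp only [hρdef]; linarith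
  set s : ℝ := Real.sqrt (r / ρ) with hsdef
  have hq0 : 0 < r / ρ := div_pos hr hρ0
  have hq1 : r / ρ < 1 := (div_lt_one hρ0).mpr hrρ
  have hs0 : 0 < s := Real.sqrt_pos.mpr hq0
  have hs1 : s < 1 := by
    rw [hsdef, show (1 : ℝ) = Real.sqrt 1 by simp]
    exact Real.sqrt_lt_sqrt hq0.le hq1
  have hs2 : s ^ 2 = r / ρ := Real.sq_sqrt hq0.le
  set δ : ℝ := -Real.log s with hδdef
  have hδ0 : 0 < δ := by
    have := Real.log_neg hs0 hs1
    simp only [hδdef]; linarith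
  obtain ⟨M, hM⟩ := hgrowth δ hδ0
  have hM0 : 0 ≤ M := le_trans (by positivity) (hM n₀ le_rfl)
  have hexpδ : Real.exp δ = s⁻¹ := by
    rw [hδdef, Real.exp_neg, Real.exp_log hs0]
  have h1s : 0 < 1 - s := by linarith
  refine ⟨(M + 1) * (1 - s)⁻¹, mul_pos (by linarith) (inv_pos.mpr h1s), ?_⟩
  intro p hp0 B hB z hz
  have hB0 : 0 ≤ B := le_trans (norm_nonneg _)
    (hB 0 (by simpa using lt_trans hr hrR))
  have hcoeff : ∀ n : ℕ, ‖p.coeff n‖ * ρ ^ n ≤ B := by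
    intro n
    refine coeff_bound p ρ B hρ0 (fun w hw => hB w (by rw [hw]; exact hρR)) n
  -- bound each term
  have hterm : ∀ n ∈ Finset.range (p.natDegree + 1),
      ‖γ (n : ℂ) * p.coeff n * z ^ n‖ ≤ (M + 1) * B * s ^ n := by
    intro n _
    rcases lt_or_ge n n₀ with hn | hn
    · rw [hp0 n hn]
      simp only [mul_zero, zero_mul, norm_zero]
      exact mul_nonneg (mul_nonneg (by linarith) hB0) (pow_nonneg hs0.le n)
    · have hγn : ‖γ (n : ℂ)‖ ≤ M * (s⁻¹) ^ n := by
        have h1 := hM n (by exact_mod_cast hn)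
        have h2 : ((n : ℝ) : ℂ) = (n : ℂ) := by push_cast; ring
        rw [h2] at h1
        have h3 : Real.exp (-δ * n) > 0 := Real.exp_pos _
        have h4 : Real.exp (δ * n) = (s⁻¹) ^ n := by
          rw [mul_comm, Real.exp_nat_mul, hexpδ]
        calc ‖γ (n : ℂ)‖
            = ‖γ (n : ℂ)‖ * Real.exp (-δ * n) * Real.exp (δ * n) := by
              rw [mul_assoc, ← Real.exp_add]; ring_nf; simp
          _ ≤ M * Real.exp (δ * n) := by
              exact mul_le_mul_of_nonneg_right h1 (Real.exp_pos _).le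
          _ = M * (s⁻¹) ^ n := by rw [h4]
      have hzn : ‖z ^ n‖ ≤ r ^ n := by
        rw [norm_pow]
        exact pow_le_pow_left₀ (norm_nonneg _) hz.le n
      calc ‖γ (n : ℂ) * p.coeff n * z ^ n‖
          = ‖γ (n : ℂ)‖ * ‖p.coeff n‖ * ‖z ^ n‖ := by
            rw [norm_mul, norm_mul]
        _ ≤ (M * (s⁻¹) ^ n) * ‖p.coeff n‖ * r ^ n := by
            apply mul_le_mul (mul_le_mul_of_nonneg_right hγn (norm_nonneg _)) hzn
              (norm_nonneg _) (by positivity)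
        _ = M * (s⁻¹) ^ n * (r / ρ) ^ n * (‖p.coeff n‖ * ρ ^ n) := by
            field_simp
            rw [mul_assoc _ ((r / ρ) ^ n), ← mul_pow, div_mul_cancel₀ r hρ0.ne']
        _ ≤ M * (s⁻¹) ^ n * (r / ρ) ^ n * B := by
            refine mul_le_mul_of_nonneg_left (hcoeff n) (by positivity)
        _ = M * B * s ^ n := by
            rw [← hs2]
            rw [show (s ^ 2 : ℝ) ^ n = s ^ n * s ^ n by ring]
            rw [show ((s : ℝ)⁻¹) ^ n = (s ^ n)⁻¹ by rw [inv_pow]]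
            field_simp
        _ ≤ (M + 1) * B * s ^ n := by
            refine mul_le_mul_of_nonneg_right
              (mul_le_mul_of_nonneg_right (by linarith) hB0) (by positivity)
  calc ‖∑ n ∈ Finset.range (p.natDegree + 1), γ (n : ℂ) * p.coeff n * z ^ n‖
      ≤ ∑ n ∈ Finset.range (p.natDegree + 1),
          ‖γ (n : ℂ) * p.coeff n * z ^ n‖ := norm_sum_le _ _
    _ ≤ ∑ n ∈ Finset.range (p.natDegree + 1), (M + 1) * B * s ^ n :=
        Finset.sum_le_sum hterm
    _ = (M + 1) * B * ∑ n ∈ Finset.range (p.natDegree + 1), s ^ n := by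
        rw [Finset.mul_sum]
    _ ≤ (M + 1) * B * (1 - s)⁻¹ := by
        refine mul_le_mul_of_nonneg_left ?_ (by positivity)
        have h := Summable.sum_le_tsum (Finset.range (p.natDegree + 1))
          (fun i _ => pow_nonneg hs0.le i) (summable_geometric_of_lt_one hs0.le hs1)
        rwa [tsum_geometric_of_lt_one hs0.le hs1] at h
    _ = (M + 1) * (1 - s)⁻¹ * B := by ring
end
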